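/- Let S be a finite semigroup and let k and k' be two algebraically closed fields of the same characteristic. Then the effective dimension of S over k equals the effective dimension of S over k'. -/

import Mathlib

open scoped Classical

/-- Transfer an injective multiplicative matrix representation from a field `k`
to an algebraically closed field `k'`, both algebras over a common base field `F`. -/
lemma exists_rep_transfer {S : Type*} [Semigroup S] [Finite S]
    (F : Type) [Field F] {k k' : Type*} [Field k] [Field k'] [Algebra F k]
    [Algebra F k'] [IsAlgClosed k'] {m : ℕ} (φ : S → Matrix (Fin m) (Fin m) k)
    (hinj : Function.Injective φ) (hmul : ∀ s t : S, φ (s * t) = φ s * φ t) :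
    ∃ ψ : S → Matrix (Fin m) (Fin m) k',
      Function.Injective ψ ∧ ∀ s t : S, ψ (s * t) = ψ s * ψ t := by
  haveI := Fintype.ofFinite S
  rcases Nat.eq_zero_or_pos m with hm | hm
  · subst hm
    haveI : Subsingleton S := ⟨fun s t => hinj (Subsingleton.elim _ _)⟩
    exact ⟨fun _ => 0, fun s t _ => Subsingleton.elim s t,
      fun s t => Subsingleton.elim _ _⟩
  haveI : Nonempty (Fin m) := ⟨⟨0, hm⟩⟩
  -- choose witnessing entries for injectivity
  have hwit : ∀ p : S × S, ∃ ij : Fin m × Fin m,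
      p.1 ≠ p.2 → φ p.1 ij.1 ij.2 ≠ φ p.2 ij.1 ij.2 := by
    rintro ⟨s, t⟩
    by_cases hst : s = t
    · exact ⟨⟨Classical.arbitrary _, Classical.arbitrary _⟩, fun h => absurd hst h⟩
    · by_contra h
      push_neg at h
      refine hst (hinj (Matrix.ext fun i j => ?_))
      exact (h ⟨i, j⟩).2
  choose ij hij using hwit
  set d : S × S → k := fun p => φ p.1 (ij p).1 (ij p).2 - φ p.2 (ij p).1 (ij p).2 with hd
  have hdne : ∀ p : S × S, p.1 ≠ p.2 → d p ≠ 0 := fun p hp =>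
    sub_ne_zero_of_ne (hij p hp)
  -- the finitely generated subalgebra containing all entries and inverses of witnesses
  set G : Set k := (Set.range fun x : S × Fin m × Fin m => φ x.1 x.2.1 x.2.2) ∪
      (Set.range fun p : S × S => (d p)⁻¹) with hG
  have hGfin : G.Finite := (Set.finite_range _).union (Set.finite_range _)
  set A : Subalgebra F k := Algebra.adjoin F G with hA
  have hmem : ∀ (s : S) (i j : Fin m), φ s i j ∈ A := fun s i j =>
    Algebra.subset_adjoin (Or.inl ⟨⟨s, i, j⟩, rfl⟩)
  have hmemInv : ∀ p : S × S, (d p)⁻¹ ∈ A := fun p =>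
    Algebra.subset_adjoin (Or.inr ⟨p, rfl⟩)
  have hmemd : ∀ p : S × S, d p ∈ A := fun p =>
    sub_mem (hmem _ _ _) (hmem _ _ _)
  haveI : Algebra.FiniteType F A := by
    rw [← Subalgebra.fg_iff_finiteType]
    have : G = (hGfin.toFinset : Set k) := (Set.Finite.coe_toFinset hGfin).symm
    rw [hA, this]
    exact Subalgebra.fg_adjoin_finset _
  haveI : Nontrivial A := nontrivial_of_ne (1 : A) 0 fun h =>
    one_ne_zero (congrArg Subtype.val h)
  obtain ⟨M, hM⟩ := Ideal.exists_maximal A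
  haveI := hM
  letI : Field (A ⧸ M) := Ideal.Quotient.field M
  haveI : Algebra.FiniteType F (A ⧸ M) :=
    Algebra.FiniteType.of_surjective (Ideal.Quotient.mkₐ F M)
      (Ideal.Quotient.mkₐ_surjective F M)
  haveI : Module.Finite F (A ⧸ M) := finite_of_finite_type_of_isJacobsonRing F (A ⧸ M)
  haveI : Algebra.IsAlgebraic F (A ⧸ M) := Algebra.IsAlgebraic.of_finite F (A ⧸ M)
  haveI : FaithfulSMul F (A ⧸ M) :=
    (faithfulSMul_iff_algebraMap_injective F (A ⧸ M)).mpr (algebraMap F (A ⧸ M)).injective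
  haveI : Module.IsTorsionFree F (A ⧸ M) := FaithfulSMul.to_isTorsionFree F (A ⧸ M)
  -- the embedding into k'
  let lift : (A ⧸ M) →ₐ[F] k' := IsAlgClosed.lift
  let g : A →+* k' := lift.toRingHom.comp (Ideal.Quotient.mk M)
  -- g does not kill the witnesses
  have hgd : ∀ p : S × S, p.1 ≠ p.2 → g ⟨d p, hmemd p⟩ ≠ 0 := by
    intro p hp hzero
    have hprod : (⟨d p, hmemd p⟩ : A) * ⟨(d p)⁻¹, hmemInv p⟩ = 1 := by
      ext
      exact mul_inv_cancel₀ (hdne p hp)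
    have := congrArg g hprod
    rw [map_mul, map_one, hzero, zero_mul] at this
    exact zero_ne_one this
  -- the matrices over A
  let Φ : S → Matrix (Fin m) (Fin m) A := fun s => Matrix.of fun i j => ⟨φ s i j, hmem s i j⟩
  have hvalinj : Function.Injective (A.val.toRingHom.mapMatrix :
      Matrix (Fin m) (Fin m) A →+* Matrix (Fin m) (Fin m) k) := by
    intro X Y h
    ext i j
    have h2 : (A.val.toRingHom.mapMatrix X) i j = (A.val.toRingHom.mapMatrix Y) i j := by
      rw [h]
    simpa [RingHom.mapMatrix_apply, Matrix.map_apply] using h2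
  have hΦval : ∀ s : S, A.val.toRingHom.mapMatrix (Φ s) = φ s := fun s =>
    Matrix.ext fun i j => rfl
  have hΦmul : ∀ s t : S, Φ (s * t) = Φ s * Φ t := by
    intro s t
    apply hvalinj
    rw [map_mul, hΦval, hΦval, hΦval, hmul]
  refine ⟨fun s => g.mapMatrix (Φ s), ?_, ?_⟩
  · intro s t h
    by_contra hst
    replace h : g.mapMatrix (Φ s) = g.mapMatrix (Φ t) := h
    have hentry : (g.mapMatrix (Φ s)) (ij (s,t)).1 (ij (s,t)).2 =
        (g.mapMatrix (Φ t)) (ij (s,t)).1 (ij (s,t)).2 := by rw [h]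
    simp only [RingHom.mapMatrix_apply, Matrix.map_apply] at hentry
    have : g ⟨φ s (ij (s,t)).1 (ij (s,t)).2, hmem _ _ _⟩ =
        g ⟨φ t (ij (s,t)).1 (ij (s,t)).2, hmem _ _ _⟩ := hentry
    apply hgd (s, t) hst
    have hsub : (⟨d (s,t), hmemd (s,t)⟩ : A) =
        ⟨φ s (ij (s,t)).1 (ij (s,t)).2, hmem _ _ _⟩ -
        ⟨φ t (ij (s,t)).1 (ij (s,t)).2, hmem _ _ _⟩ := rfl
    rw [hsub, map_sub, this, sub_self]
  · intro s t
    show g.mapMatrix (Φ (s * t)) = g.mapMatrix (Φ s) * g.mapMatrix (Φ t)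
    rw [hΦmul, map_mul]

/-- One inclusion between the sets of representable dimensions. -/
lemma repSet_subset {S : Type*} [Semigroup S] [Finite S]
    (k k' : Type*) [Field k] [Field k'] [IsAlgClosed k']
    (hchar : ringChar k = ringChar k') :
    {m : ℕ | ∃ φ : S → Matrix (Fin m) (Fin m) k,
      Function.Injective φ ∧ ∀ s t : S, φ (s * t) = φ s * φ t} ⊆
    {m : ℕ | ∃ φ : S → Matrix (Fin m) (Fin m) k',
      Function.Injective φ ∧ ∀ s t : S, φ (s * t) = φ s * φ t} := by
  rintro m ⟨φ, hinj, hmul⟩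
  haveI hk : CharP k (ringChar k) := ringChar.charP k
  haveI hk' : CharP k' (ringChar k) := hchar ▸ ringChar.charP k'
  rcases CharP.char_is_prime_or_zero k (ringChar k) with hp | hp
  · haveI : Fact (ringChar k).Prime := ⟨hp⟩
    letI : Algebra (ZMod (ringChar k)) k := ZMod.algebra k (ringChar k)
    letI : Algebra (ZMod (ringChar k)) k' := ZMod.algebra k' (ringChar k)
    exact exists_rep_transfer (ZMod (ringChar k)) φ hinj hmul
  · haveI : CharP k 0 := hp ▸ hk
    haveI : CharP k' 0 := hp ▸ hk'
    haveI : CharZero k := CharP.charP_to_charZero k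
    haveI : CharZero k' := CharP.charP_to_charZero k'
    exact exists_rep_transfer ℚ φ hinj hmul



/-- The effective dimension of a finite semigroup `S` over a field `k`: the least
`m` such that `S` admits an injective multiplicative representation by `m × m`
matrices over `k`. -/
noncomputable def effDim (k : Type*) [Field k] (S : Type*) [Mul S] : ℕ :=
  sInf {m : ℕ | ∃ φ : S → Matrix (Fin m) (Fin m) k,
    Function.Injective φ ∧ ∀ s t : S, φ (s * t) = φ s * φ t}

/-- The effective dimension of a finite semigroup is the same over any two
algebraically closed fields of the same characteristic. -/
theorem effDim_eq_of_isAlgClosed_of_ringChar_eq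
    {S : Type*} [Semigroup S] [Finite S]
    (k k' : Type*) [Field k] [Field k'] [IsAlgClosed k] [IsAlgClosed k']
    (hchar : ringChar k = ringChar k') :
    effDim k S = effDim k' S := by
  unfold effDim
  congr 1
  exact Set.Subset.antisymm (repSet_subset k k' hchar) (repSet_subset k' k hchar.symm)
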